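/- Let F be a field and S_3(F) = { (a_{ij}) in T_3(F) : a_{11} = a_{22} }. Then S_3(F) is an i-reversible subring of T_3(F) strictly containing D_3(F). -/

import Mathlib

/-- A ring is *i-reversible* if whenever `a * b` is a non-zero idempotent, `b * a` is an
idempotent. -/
def IsIReversible (S : Type*) [Ring S] : Prop :=
  ∀ a b : S, IsIdempotentElem (a * b) → a * b ≠ 0 → IsIdempotentElem (b * a)

/-- A ring is *reversible* if `a * b = 0` implies `b * a = 0`. -/
def IsReversible (S : Type*) [Ring S] : Prop :=
  ∀ a b : S, a * b = 0 → b * a = 0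

/-- A ring has only trivial idempotents if its only idempotents are `0` and `1`. -/
def HasOnlyTrivialIdempotents (S : Type*) [Ring S] : Prop :=
  ∀ e : S, IsIdempotentElem e → e = 0 ∨ e = 1

/-- Upper triangular predicate for square matrices. -/
def Matrix.IsUpperTri {n : ℕ} {R : Type*} [Zero R] (A : Matrix (Fin n) (Fin n) R) : Prop :=
  ∀ ⦃i j : Fin n⦄, j < i → A i j = 0

lemma Matrix.IsUpperTri.mul {n : ℕ} {R : Type*} [Ring R]
    {A B : Matrix (Fin n) (Fin n) R} (hA : A.IsUpperTri) (hB : B.IsUpperTri) :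
    (A * B).IsUpperTri := by
  intro i j h
  rw [Matrix.mul_apply]
  refine Finset.sum_eq_zero fun k _ => ?_
  rcases lt_or_ge k i with hk | hk
  · rw [hA hk, zero_mul]
  · rw [hB (lt_of_lt_of_le h hk), mul_zero]

/-- The ring `T_n(R)` of upper triangular `n × n` matrices, as a subring of the matrix ring. -/
def triangularRing (n : ℕ) (R : Type*) [Ring R] :
    Subring (Matrix (Fin n) (Fin n) R) where
  carrier := {A | A.IsUpperTri}
  mul_mem' ha hb := ha.mul hb
  one_mem' := fun i j h => by simp [Matrix.one_apply, (ne_of_lt h).symm]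
  add_mem' ha hb := fun i j h => by simp [Matrix.add_apply, ha h, hb h]
  zero_mem' := fun i j h => rfl
  neg_mem' ha := fun i j h => by simp [ha h]

lemma diag_mul_upperTri {n : ℕ} {R : Type*} [Ring R]
    {A B : Matrix (Fin n) (Fin n) R} (hA : A.IsUpperTri)
    (hB : B.IsUpperTri) (i : Fin n) : (A * B) i i = A i i * B i i := by
  rw [Matrix.mul_apply]
  refine Finset.sum_eq_single i (fun k _ hk => ?_) (by simp)
  rcases lt_or_gt_of_ne hk with h | h
  · rw [hA h, zero_mul]
  · rw [hB h, mul_zero]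

/-- The ring `D_n(R)` of upper triangular `n × n` matrices with constant diagonal. -/
def constDiagRing (n : ℕ) (R : Type*) [Ring R] :
    Subring (Matrix (Fin n) (Fin n) R) where
  carrier := {A | A.IsUpperTri ∧ ∀ i j : Fin n, A i i = A j j}
  mul_mem' := by
    rintro A B ⟨hA, hA'⟩ ⟨hB, hB'⟩
    refine ⟨hA.mul hB, fun i j => ?_⟩
    rw [diag_mul_upperTri hA hB, diag_mul_upperTri hA hB, hA' i j, hB' i j]
  one_mem' := ⟨fun i j h => by simp [Matrix.one_apply, (ne_of_lt h).symm], by simp⟩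
  add_mem' := by
    rintro A B ⟨hA, hA'⟩ ⟨hB, hB'⟩
    exact ⟨fun i j h => by simp [Matrix.add_apply, hA h, hB h],
      fun i j => by simp [Matrix.add_apply, hA' i j, hB' i j]⟩
  zero_mem' := ⟨fun i j h => rfl, by simp⟩
  neg_mem' := by
    rintro A ⟨hA, hA'⟩
    exact ⟨fun i j h => by simp [hA h], fun i j => by simp [hA' i j]⟩

/-- The ring `S_3(F)` of upper triangular `3 × 3` matrices with equal `(1,1)` and `(2,2)`
entries. -/
def S3Ring (F : Type*) [Ring F] : Subring (Matrix (Fin 3) (Fin 3) F) where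
  carrier := {A | A.IsUpperTri ∧ A 0 0 = A 1 1}
  mul_mem' := by
    rintro A B ⟨hA, hA'⟩ ⟨hB, hB'⟩
    refine ⟨hA.mul hB, ?_⟩
    rw [diag_mul_upperTri hA hB, diag_mul_upperTri hA hB, hA', hB']
  one_mem' := ⟨fun i j h => by simp [Matrix.one_apply, (ne_of_lt h).symm], by simp⟩
  add_mem' := by
    rintro A B ⟨hA, hA'⟩ ⟨hB, hB'⟩
    exact ⟨fun i j h => by simp [Matrix.add_apply, hA h, hB h],
      by simp [Matrix.add_apply, hA', hB']⟩
  zero_mem' := ⟨fun i j h => rfl, rfl⟩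
  neg_mem' := by
    rintro A ⟨hA, hA'⟩
    exact ⟨fun i j h => by simp [hA h], by simp [hA']⟩

/-- For a field `F`, `S_3(F)` is an i-reversible subring of `T_3(F)` strictly containing
`D_3(F)`. -/
lemma tri_prod {F : Type*} [Field F] (p q r s t p2 q2 r2 s2 t2 : F) :
    (!![p,q,r;0,p,s;0,0,t] : Matrix (Fin 3) (Fin 3) F) * !![p2,q2,r2;0,p2,s2;0,0,t2] =
      !![p*p2, p*q2+q*p2, p*r2+q*s2+r*t2; 0, p*p2, p*s2+s*t2; 0, 0, t*t2] := by
  rw [Matrix.mul_fin_three]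
  ext i j
  fin_cases i <;> fin_cases j <;> simp [Matrix.vecHead, Matrix.vecTail]

lemma scalar_key {F : Type*} [Field F] (a x y z b a' x' y' z' b' : F)
    (hu : (a*a')*(a*a') = a*a')
    (hp : (a*a')*(a*x'+x*a') + (a*x'+x*a')*(a*a') = a*x'+x*a')
    (hr : (a*a')*(a*z'+z*b') + (a*z'+z*b')*(b*b') = a*z'+z*b')
    (hq : (a*a')*(a*y'+x*z'+y*b') + (a*x'+x*a')*(a*z'+z*b')
        + (a*y'+x*z'+y*b')*(b*b') = a*y'+x*z'+y*b')
    (hv : (b*b')*(b*b') = b*b')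
    (hne : a*a' ≠ 0 ∨ a*x'+x*a' ≠ 0 ∨ a*y'+x*z'+y*b' ≠ 0 ∨ a*z'+z*b' ≠ 0 ∨ b*b' ≠ 0) :
    ((a'*a)*(a'*x+x'*a) + (a'*x+x'*a)*(a'*a) = a'*x+x'*a) ∧
    ((a'*a)*(a'*z+z'*b) + (a'*z+z'*b)*(b'*b) = a'*z+z'*b) ∧
    ((a'*a)*(a'*y+x'*z+y'*b) + (a'*x+x'*a)*(a'*z+z'*b)
        + (a'*y+x'*z+y'*b)*(b'*b) = a'*y+x'*z+y'*b) := by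
  have hucase : a*a' = 0 ∨ a*a' = 1 := by
    rcases mul_eq_zero.mp (show (a*a')*(a*a'-1) = 0 by linear_combination hu) with h | h
    · exact Or.inl h
    · exact Or.inr (by linear_combination h)
  have hvcase : b*b' = 0 ∨ b*b' = 1 := by
    rcases mul_eq_zero.mp (show (b*b')*(b*b'-1) = 0 by linear_combination hv) with h | h
    · exact Or.inl h
    · exact Or.inr (by linear_combination h)
  rcases hucase with hu0 | hu1 <;> rcases hvcase with hv0 | hv1
  · -- u=0, v=0 : contradiction
    exfalso
    have hp0 : a*x'+x*a' = 0 := by linear_combination 2*(a*x'+x*a')*hu0 - hp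
    have hr0 : a*z'+z*b' = 0 := by
      linear_combination (a*z'+z*b')*hu0 + (a*z'+z*b')*hv0 - hr
    have hq0 : a*y'+x*z'+y*b' = 0 := by
      linear_combination (a*y'+x*z'+y*b')*hu0 + (a*y'+x*z'+y*b')*hv0 + (a*z'+z*b')*hp0 - hq
    rcases hne with h | h | h | h | h <;> exact h (by assumption)
  · -- u=0, v=1
    have hp0 : a*x'+x*a' = 0 := by linear_combination 2*(a*x'+x*a')*hu0 - hp
    have hp'0 : a'*x+x'*a = 0 := by linear_combination hp0
    refine ⟨by linear_combination (2*(a'*a)-1)*hp'0, ?_, ?_⟩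
    · linear_combination (a'*z+z'*b)*hu0 + (a'*z+z'*b)*hv1
    · linear_combination (a'*y+x'*z+y'*b)*hu0 + (a'*z+z'*b)*hp'0 + (a'*y+x'*z+y'*b)*hv1
  · -- u=1, v=0
    have hp0 : a*x'+x*a' = 0 := by linear_combination hp - 2*(a*x'+x*a')*hu1
    have hp'0 : a'*x+x'*a = 0 := by linear_combination hp0
    refine ⟨by linear_combination (2*(a'*a)-1)*hp'0, ?_, ?_⟩
    · linear_combination (a'*z+z'*b)*hu1 + (a'*z+z'*b)*hv0
    · linear_combination (a'*y+x'*z+y'*b)*hu1 + (a'*z+z'*b)*hp'0 + (a'*y+x'*z+y'*b)*hv0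
  · -- u=1, v=1
    have hp0 : a*x'+x*a' = 0 := by linear_combination hp - 2*(a*x'+x*a')*hu1
    have hp'0 : a'*x+x'*a = 0 := by linear_combination hp0
    have hr0 : a*z'+z*b' = 0 := by
      linear_combination hr - (a*z'+z*b')*hu1 - (a*z'+z*b')*hv1
    have hq0 : a*y'+x*z'+y*b' = 0 := by
      linear_combination hq - (a*y'+x*z'+y*b')*hu1 - (a*y'+x*z'+y*b')*hv1 - (a*z'+z*b')*hp0
    have hr'0 : a'*z+z'*b = 0 := by
      linear_combination a'*b*hr0 - b*z'*hu1 - a'*z*hv1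
    have hq'0 : a'*y+x'*z+y'*b = 0 := by
      linear_combination a'*z*hp0 - a'^2*b*x*hr0 + a'*b*hq0 +
        (-(b*y') - z*x' + a'*b*x*z')*hu1 + (a'^2*x*z - a'*y)*hv1
    refine ⟨by linear_combination (2*(a'*a)-1)*hp'0, ?_, ?_⟩
    · linear_combination (a'*a + b'*b - 1)*hr'0
    · linear_combination (a'*a + b'*b - 1)*hq'0 + (a'*z+z'*b)*hp'0

lemma matrix_form {F : Type*} [Field F] (A : Matrix (Fin 3) (Fin 3) F)
    (hA : A.IsUpperTri) (hAd : A 0 0 = A 1 1) :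
    A = !![A 0 0, A 0 1, A 0 2; 0, A 0 0, A 1 2; 0, 0, A 2 2] := by
  have h10 : A 1 0 = 0 := hA (by decide)
  have h20 : A 2 0 = 0 := hA (by decide)
  have h21 : A 2 1 = 0 := hA (by decide)
  ext i j
  fin_cases i <;> fin_cases j <;> simp [Matrix.vecHead, Matrix.vecTail, h10, h20, h21, ← hAd]


lemma BA_idem {F : Type*} [Field F] (A B : Matrix (Fin 3) (Fin 3) F)
    (hA : A.IsUpperTri) (hAd : A 0 0 = A 1 1)
    (hB : B.IsUpperTri) (hBd : B 0 0 = B 1 1)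
    (hM : (A*B)*(A*B) = A*B) (hne0 : A*B ≠ 0) :
    (B*A)*(B*A) = B*A := by
  obtain ⟨a, x, y, z, bb, hAeq⟩ : ∃ a x y z bb, A = !![a,x,y;0,a,z;0,0,bb] :=
    ⟨_,_,_,_,_, matrix_form A hA hAd⟩
  obtain ⟨a', x', y', z', b', hBeq⟩ : ∃ a' x' y' z' b', B = !![a',x',y';0,a',z';0,0,b'] :=
    ⟨_,_,_,_,_, matrix_form B hB hBd⟩
  subst hAeq hBeq
  rw [tri_prod] at hM hne0 ⊢
  rw [tri_prod] at hM ⊢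
  have h00 := congrFun (congrFun hM 0) 0
  have h01 := congrFun (congrFun hM 0) 1
  have h02 := congrFun (congrFun hM 0) 2
  have h12 := congrFun (congrFun hM 1) 2
  have h22 := congrFun (congrFun hM 2) 2
  simp at h00 h01 h02 h12 h22
  have hne : a*a' ≠ 0 ∨ a*x'+x*a' ≠ 0 ∨ a*y'+x*z'+y*b' ≠ 0 ∨ a*z'+z*b' ≠ 0 ∨ bb*b' ≠ 0 := by
    by_contra hc
    push_neg at hc
    obtain ⟨e1, e2, e3, e4, e5⟩ := hc
    apply hne0
    ext i j
    fin_cases i <;> fin_cases j <;>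
      simp [Matrix.vecHead, Matrix.vecTail, e1, e2, e3, e4, e5]
  obtain ⟨k1, k2, k3⟩ := scalar_key a x y z bb a' x' y' z' b'
    (by linear_combination h00) (by linear_combination h01) (by linear_combination h12)
    (by linear_combination h02) (by linear_combination h22) hne
  ext i j
  fin_cases i <;> fin_cases j <;> simp [Matrix.vecHead, Matrix.vecTail] <;>
    first
      | linear_combination h00
      | linear_combination h22
      | linear_combination k1
      | linear_combination k2
      | linear_combination k3

lemma mem_S3Ring {F : Type*} [Ring F] {A : Matrix (Fin 3) (Fin 3) F} :
    A ∈ S3Ring F ↔ A.IsUpperTri ∧ A 0 0 = A 1 1 := Iff.rfl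

lemma mem_constDiagRing {F : Type*} [Ring F] {A : Matrix (Fin 3) (Fin 3) F} :
    A ∈ constDiagRing 3 F ↔ A.IsUpperTri ∧ ∀ i j : Fin 3, A i i = A j j := Iff.rfl

theorem S3Ring_isIReversible (F : Type*) [Field F] :
    IsIReversible (S3Ring F) ∧ S3Ring F ≤ triangularRing 3 F ∧
      constDiagRing 3 F < S3Ring F := by
  refine ⟨?_, fun A hA => hA.1, ?_⟩
  · rintro ⟨A, hA, hAd⟩ ⟨B, hB, hBd⟩ hidem hne
    have hM : (A*B)*(A*B) = A*B := congrArg Subtype.val hidem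
    have hne0 : A*B ≠ 0 := fun h => hne (Subtype.ext h)
    exact Subtype.ext (BA_idem A B hA hAd hB hBd hM hne0)
  · refine lt_of_le_of_ne (fun A hA => ⟨hA.1, hA.2 0 1⟩) ?_
    intro h
    have hmem : (!![0,0,0;0,0,0;0,0,1] : Matrix (Fin 3) (Fin 3) F) ∈ constDiagRing 3 F := by
      rw [h]
      refine mem_S3Ring.mpr ⟨?_, by simp⟩
      intro i j hij
      fin_cases i <;> fin_cases j <;> first | rfl | exact absurd hij (by decide)
    have h02 := (mem_constDiagRing.mp hmem).2 0 2
    simp [Matrix.vecHead, Matrix.vecTail] at h02
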